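/- Let G be an n-vertex graph with largest Laplacian eigenvalue μ > 0 and minimum degree δ. Then α(G) ≤ n(μ − δ)/μ. -/

import Mathlib

open scoped Classical
open Matrix Finset

/-- The independence number of a finite simple graph. -/
noncomputable def indepNum {V : Type*} [Fintype V] (G : SimpleGraph V) : ℕ :=
  sSup {k | ∃ S : Finset V, (∀ u ∈ S, ∀ v ∈ S, u ≠ v → ¬ G.Adj u v) ∧ S.card = k}

/-- Rayleigh-type bound: if every eigenvalue of the Laplacian is at most μ, then the
quadratic form is bounded by μ times the norm squared. -/
lemma rayleigh_bound {n : ℕ} (G : SimpleGraph (Fin n)) (μ : ℝ)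
    (hμmax : ∀ (ν : ℝ) (v : Fin n → ℝ), v ≠ 0 → (G.lapMatrix ℝ).mulVec v = ν • v → ν ≤ μ)
    (x : Fin n → ℝ) : x ⬝ᵥ ((G.lapMatrix ℝ) *ᵥ x) ≤ μ * (x ⬝ᵥ x) := by
  set M : Matrix (Fin n) (Fin n) ℝ := μ • (1 : Matrix (Fin n) (Fin n) ℝ) - G.lapMatrix ℝ with hM
  have hLherm : (G.lapMatrix ℝ).IsHermitian := (SimpleGraph.posSemidef_lapMatrix ℝ G).1
  have hsmul : (μ • (1 : Matrix (Fin n) (Fin n) ℝ)).IsHermitian := by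
    show _ᴴ = _
    rw [Matrix.conjTranspose_smul, star_trivial, Matrix.conjTranspose_one]
  have hMherm : M.IsHermitian := hsmul.sub hLherm
  have hPSD : M.PosSemidef := by
    apply hMherm.posSemidef_iff_eigenvalues_nonneg.mpr
    intro i
    set w : Fin n → ℝ := ⇑(hMherm.eigenvectorBasis i) with hw
    have hw0 : w ≠ 0 := by
      have := (hMherm.eigenvectorBasis.toBasis.ne_zero i)
      simpa [hw] using fun h => this (by ext v; exact congrFun (congrArg WithLp.ofLp h) v)
    have hMw : M *ᵥ w = hMherm.eigenvalues i • w := hMherm.mulVec_eigenvectorBasis i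
    have hLw : (G.lapMatrix ℝ) *ᵥ w = (μ - hMherm.eigenvalues i) • w := by
      have : (G.lapMatrix ℝ) *ᵥ w = (μ • (1 : Matrix (Fin n) (Fin n) ℝ)) *ᵥ w - M *ᵥ w := by
        rw [hM]; rw [Matrix.sub_mulVec]; ring_nf
      rw [this, hMw, Matrix.smul_mulVec, Matrix.one_mulVec, sub_smul]
    have := hμmax _ w hw0 hLw
    rw [Pi.zero_apply]; linarith
  have h0 := hPSD.dotProduct_mulVec_nonneg x
  rw [star_trivial] at h0
  have hexp : x ⬝ᵥ (M *ᵥ x) = μ * (x ⬝ᵥ x) - x ⬝ᵥ ((G.lapMatrix ℝ) *ᵥ x) := by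
    rw [hM, Matrix.sub_mulVec, dotProduct_sub, Matrix.smul_mulVec, Matrix.one_mulVec,
      dotProduct_smul, smul_eq_mul]
  rw [hexp] at h0
  linarith

/-- Corollary 6.3: for an n-vertex graph with largest Laplacian eigenvalue μ > 0 and
minimum degree δ, α(G) ≤ n(μ − δ)/μ. -/
theorem stmt12 (n : ℕ) (G : SimpleGraph (Fin n)) (μ : ℝ) (hμpos : 0 < μ)
    (hμev : ∃ v : Fin n → ℝ, v ≠ 0 ∧ (G.lapMatrix ℝ).mulVec v = μ • v)
    (hμmax : ∀ (ν : ℝ) (v : Fin n → ℝ), v ≠ 0 → (G.lapMatrix ℝ).mulVec v = ν • v → ν ≤ μ) :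
    (indepNum G : ℝ) ≤ n * (μ - G.minDegree) / μ := by
  have hbdd : ∀ k ∈ {k | ∃ S : Finset (Fin n),
      (∀ u ∈ S, ∀ v ∈ S, u ≠ v → ¬ G.Adj u v) ∧ S.card = k}, k ≤ n := by
    rintro k ⟨S, -, rfl⟩
    simpa using S.card_le_univ
  have hmem : indepNum G ∈ {k | ∃ S : Finset (Fin n),
      (∀ u ∈ S, ∀ v ∈ S, u ≠ v → ¬ G.Adj u v) ∧ S.card = k} :=
    Nat.sSup_mem ⟨0, ∅, by simp, by simp⟩ ⟨n, hbdd⟩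
  obtain ⟨S, hSind, hScard⟩ := hmem
  rcases Nat.eq_zero_or_pos n with hn0 | hnpos
  · subst hn0
    have : S.card = 0 := le_antisymm (by simpa using S.card_le_univ) (Nat.zero_le _)
    rw [← hScard, this]
    simp
  · -- n ≥ 1
    have hne : Nonempty (Fin n) := ⟨⟨0, hnpos⟩⟩
    have hα1 : 1 ≤ indepNum G := by
      apply le_csSup ⟨n, hbdd⟩
      exact ⟨{⟨0, hnpos⟩}, by simp, by simp⟩
    set α : ℕ := S.card with hαdef
    set δ : ℕ := G.minDegree with hδdef
    -- the test vector
    set x : Fin n → ℝ := fun v => if v ∈ S then (n : ℝ) - α else -(α : ℝ) with hx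
    -- norm squared
    have hxx : x ⬝ᵥ x = (α : ℝ) * ((n : ℝ) - α) * n := by
      have h1 : ∀ v : Fin n, x v * x v =
          if v ∈ S then ((n : ℝ) - α)^2 else (α : ℝ)^2 := by
        intro v; rw [hx]; by_cases h : v ∈ S <;> simp [h] <;> ring
      rw [dotProduct]
      simp_rw [h1]
      rw [Finset.sum_ite, Finset.sum_const, Finset.sum_const]
      have hf1 : (Finset.univ.filter (fun v => v ∈ S)).card = α := by
        rw [Finset.filter_mem_eq_inter, Finset.univ_inter]
      have hf2 : (Finset.univ.filter (fun v => ¬ v ∈ S)).card = n - α := by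
        rw [Finset.filter_not, Finset.filter_mem_eq_inter, Finset.univ_inter]
        simp [Finset.card_sdiff_of_subset (Finset.subset_univ S), hαdef]
      rw [hf1, hf2]
      have hαn : α ≤ n := by simpa using S.card_le_univ
      rw [nsmul_eq_mul, nsmul_eq_mul, Nat.cast_sub hαn]
      ring
    -- quadratic form: per-row computation for rows indexed by S
    have hrowS : ∀ i ∈ S, (∑ j, if G.Adj i j then (x i - x j)^2 else 0)
        = (G.degree i : ℝ) * (n : ℝ)^2 := by
      intro i hi
      have : ∀ j : Fin n, (if G.Adj i j then (x i - x j)^2 else 0)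
          = (if G.Adj i j then (1:ℝ) else 0) * (n : ℝ)^2 := by
        intro j
        by_cases h : G.Adj i j
        · have hjS : j ∉ S := fun hj => hSind i hi j hj (G.ne_of_adj h) h
          simp only [h, if_true, hx, hi, if_true, hjS, if_false, one_mul]
          ring
        · simp [h]
      simp_rw [this, ← Finset.sum_mul, ← SimpleGraph.degree_eq_sum_if_adj]
    -- per-column computation for columns indexed by S
    have hcolS : ∀ j ∈ S, (∑ i, if G.Adj i j then (x i - x j)^2 else 0)
        = (G.degree j : ℝ) * (n : ℝ)^2 := by
      intro j hj
      have : ∀ i : Fin n, (if G.Adj i j then (x i - x j)^2 else 0)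
          = (if G.Adj j i then (1:ℝ) else 0) * (n : ℝ)^2 := by
        intro i
        by_cases h : G.Adj i j
        · have hiS : i ∉ S := fun hi => hSind i hi j hj (G.ne_of_adj h) h
          simp only [h, if_true, G.adj_comm j i, hx, hiS, if_false, hj, if_true, one_mul]
          ring
        · simp [h, G.adj_comm j i]
      simp_rw [this, ← Finset.sum_mul, ← SimpleGraph.degree_eq_sum_if_adj]
    -- rows in S are zero in columns of S, so column sums over S equal sums over Sᶜ rows;
    -- we bound the total double sum from below
    have hQ : ((α : ℝ) * δ * (n:ℝ)^2) * 2
        ≤ ∑ i : Fin n, ∑ j : Fin n, (if G.Adj i j then (x i - x j)^2 else 0) := by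
      have hsplit : ∑ i : Fin n, ∑ j : Fin n, (if G.Adj i j then (x i - x j)^2 else 0)
          = (∑ i ∈ S, ∑ j : Fin n, (if G.Adj i j then (x i - x j)^2 else 0))
          + ∑ i ∈ Sᶜ, ∑ j : Fin n, (if G.Adj i j then (x i - x j)^2 else 0) := by
        rw [Finset.sum_add_sum_compl]
      have hdegS : ∀ i ∈ S, (δ : ℝ) * (n:ℝ)^2 ≤ (G.degree i : ℝ) * (n:ℝ)^2 := by
        intro i _
        have := G.minDegree_le_degree i
        have : (δ : ℝ) ≤ (G.degree i : ℝ) := by exact_mod_cast this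
        nlinarith [sq_nonneg (n:ℝ)]
      have h1 : (α : ℝ) * δ * (n:ℝ)^2
          ≤ ∑ i ∈ S, ∑ j : Fin n, (if G.Adj i j then (x i - x j)^2 else 0) := by
        calc (α : ℝ) * δ * (n:ℝ)^2 = ∑ _i ∈ S, (δ : ℝ) * (n:ℝ)^2 := by
              rw [Finset.sum_const, hαdef, nsmul_eq_mul]; ring
          _ ≤ ∑ i ∈ S, (G.degree i : ℝ) * (n:ℝ)^2 := Finset.sum_le_sum hdegS
          _ = _ := by
              refine (Finset.sum_congr rfl fun i hi => ?_).symm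
              exact hrowS i hi
      have h2 : (α : ℝ) * δ * (n:ℝ)^2
          ≤ ∑ i ∈ Sᶜ, ∑ j : Fin n, (if G.Adj i j then (x i - x j)^2 else 0) := by
        have hzeroS : ∀ j ∈ S, ∀ i ∈ S, (if G.Adj i j then (x i - x j)^2 else 0) = 0 := by
          intro j hj i hi
          rcases eq_or_ne i j with rfl | hij
          · simp [G.irrefl]
          · simp [hSind i hi j hj hij]
        have hswap : ∑ i ∈ Sᶜ, ∑ j ∈ S, (if G.Adj i j then (x i - x j)^2 else 0)
            = ∑ j ∈ S, ∑ i ∈ Sᶜ, (if G.Adj i j then (x i - x j)^2 else 0) :=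
          Finset.sum_comm
        have hcol' : ∀ j ∈ S, ∑ i ∈ Sᶜ, (if G.Adj i j then (x i - x j)^2 else 0)
            = (G.degree j : ℝ) * (n : ℝ)^2 := by
          intro j hj
          have : ∑ i ∈ Sᶜ, (if G.Adj i j then (x i - x j)^2 else 0)
              = ∑ i : Fin n, (if G.Adj i j then (x i - x j)^2 else 0) := by
            rw [← Finset.sum_add_sum_compl S (fun i => if G.Adj i j then (x i - x j)^2 else 0)]
            rw [Finset.sum_eq_zero (hzeroS j hj), zero_add]
          rw [this, hcolS j hj]
        calc (α : ℝ) * δ * (n:ℝ)^2 = ∑ _j ∈ S, (δ : ℝ) * (n:ℝ)^2 := by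
              rw [Finset.sum_const, hαdef, nsmul_eq_mul]; ring
          _ ≤ ∑ j ∈ S, (G.degree j : ℝ) * (n:ℝ)^2 := Finset.sum_le_sum hdegS
          _ = ∑ j ∈ S, ∑ i ∈ Sᶜ, (if G.Adj i j then (x i - x j)^2 else 0) :=
              (Finset.sum_congr rfl fun j hj => (hcol' j hj).symm)
          _ = ∑ i ∈ Sᶜ, ∑ j ∈ S, (if G.Adj i j then (x i - x j)^2 else 0) := hswap.symm
          _ ≤ ∑ i ∈ Sᶜ, ∑ j : Fin n, (if G.Adj i j then (x i - x j)^2 else 0) := by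
              refine Finset.sum_le_sum fun i _ => ?_
              refine Finset.sum_le_sum_of_subset_of_nonneg (Finset.subset_univ S)
                fun j _ _ => ?_
              positivity
      rw [hsplit]; linarith
    -- Rayleigh bound
    have hray := rayleigh_bound G μ hμmax x
    have hform : x ⬝ᵥ ((G.lapMatrix ℝ) *ᵥ x)
        = (∑ i : Fin n, ∑ j : Fin n, (if G.Adj i j then (x i - x j)^2 else 0)) / 2 := by
      rw [← Matrix.toLinearMap₂'_apply', SimpleGraph.lapMatrix_toLinearMap₂']
    rw [hform, hxx] at hray
    -- main inequality: α δ n² ≤ μ α (n − α) n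
    have hmain : (α : ℝ) * δ * (n:ℝ)^2 ≤ μ * ((α : ℝ) * ((n:ℝ) - α) * n) := by linarith
    have hα1' : (1 : ℝ) ≤ (α : ℝ) := by
      have := hα1; rw [← hScard] at this; exact_mod_cast this
    have hn1 : (1 : ℝ) ≤ (n : ℝ) := by exact_mod_cast hnpos
    rw [← hScard, le_div_iff₀ hμpos]
    nlinarith [hmain, hα1', hn1, mul_pos (lt_of_lt_of_le zero_lt_one hα1')
      (lt_of_lt_of_le zero_lt_one hn1)]
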